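/- arXiv:2412.13473 — 5 statements merged into one kernel-verified Lean document; each statement's English description precedes it below -/
import Mathlib

section
/- Under Assumption 1, for every z ∈ E with ‖z‖ ≤ Z, every integer j ≥ 1, and all step sizes ρ, η ∈ [ρ_l, ρ_u] with ρ ≤ η, one has ‖g^j(z, ρ) − g^j(z, η)‖ ≤ (η − ρ)·D(ρ)^j·LZ/β. -/
/-- `gdIter f' ρ j z` is the `j`-fold iterate `g^j(z, ρ)` of the one-step
gradient-descent map `g(z, ρ) = z - ρ • f' z`. -/
noncomputable def gdIter {E : Type*} [NormedAddCommGroup E] [Module ℝ E]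
    (f' : E → E) (ρ : ℝ) : ℕ → E → E
  | 0, z => z
  | n + 1, z => gdIter f' ρ n z - ρ • f' (gdIter f' ρ n z)

open Set
open scoped RealInnerProductSpace

section Aux
variable {E : Type*} [NormedAddCommGroup E] [InnerProductSpace ℝ E] [CompleteSpace E]
variable (f : E → ℝ) (f' : E → E)

lemma gd_lineDeriv (hdiff : ∀ x : E, HasGradientAt f (f' x) x) (x v : E) (t : ℝ) :
    HasDerivAt (fun s : ℝ => f (x + s • v)) ⟪f' (x + t • v), v⟫ t := by
  have h1 : HasDerivAt (fun s : ℝ => x + s • v) v t := by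
    simpa using ((hasDerivAt_id t).smul_const v).const_add x
  have h2 := (hdiff (x + t • v)).hasFDerivAt.comp_hasDerivAt t h1
  simpa [InnerProductSpace.toDual_apply_apply, Function.comp_def] using h2

lemma gd_subgrad (hconv : ConvexOn ℝ Set.univ f)
    (hdiff : ∀ x : E, HasGradientAt f (f' x) x) (x y : E) :
    f x + ⟪f' x, y - x⟫ ≤ f y := by
  set v := y - x with hv
  have hφconv : ConvexOn ℝ univ (fun s : ℝ => f (x + s • v)) := by
    have h := hconv.comp_affineMap (AffineMap.lineMap x y)
    simp only [Set.preimage_univ] at h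
    rw [show (fun s : ℝ => f (x + s • v)) = f ∘ AffineMap.lineMap x y from ?_]
    · exact h
    funext s
    simp only [Function.comp, AffineMap.lineMap_apply_module, hv]
    congr 1
    module
  have hline := gd_lineDeriv f f' hdiff x v 0
  simp only [zero_smul, add_zero] at hline
  have hslope := hφconv.le_slope_of_hasDerivAt (mem_univ (0:ℝ)) (mem_univ (1:ℝ))
    zero_lt_one hline
  rw [slope_def_field] at hslope
  simp only [one_smul, zero_smul, add_zero, sub_zero, div_one] at hslope
  have h1 : x + v = y := by simp [hv]
  rw [h1] at hslope
  linarith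

lemma gd_descent (L : ℝ) (hL : 0 < L)
    (hdiff : ∀ x : E, HasGradientAt f (f' x) x)
    (hlip : ∀ z₁ z₂ : E, ‖f' z₁ - f' z₂‖ ≤ L * ‖z₁ - z₂‖) (x y : E) :
    f y ≤ f x + ⟪f' x, y - x⟫ + L / 2 * ‖y - x‖ ^ 2 := by
  set v := y - x with hv
  set g : ℝ → ℝ := fun t => f (x + t • v) - t * ⟪f' x, v⟫ - L * t ^ 2 / 2 * ‖v‖ ^ 2 with hg
  have hg' : ∀ t : ℝ, HasDerivAt g (⟪f' (x + t • v), v⟫ - ⟪f' x, v⟫ - L * t * ‖v‖ ^ 2) t := by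
    intro t
    have h1 := gd_lineDeriv f f' hdiff x v t
    have h2 : HasDerivAt (fun t : ℝ => t * ⟪f' x, v⟫) ⟪f' x, v⟫ t := by
      simpa using (hasDerivAt_id t).mul_const ⟪f' x, v⟫
    have h3 : HasDerivAt (fun t : ℝ => L * t ^ 2 / 2 * ‖v‖ ^ 2) (L * t * ‖v‖ ^ 2) t := by
      have h4 := (((hasDerivAt_pow 2 t).const_mul L).div_const 2).mul_const (‖v‖ ^ 2)
      refine h4.congr_deriv ?_
      ring
    exact (h1.sub h2).sub h3
  have hmono : AntitoneOn g (Icc (0:ℝ) 1) := by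
    apply antitoneOn_of_deriv_nonpos (convex_Icc 0 1)
    · exact fun t _ => (hg' t).continuousAt.continuousWithinAt
    · exact fun t _ => (hg' t).differentiableAt.differentiableWithinAt
    · intro t ht
      rw [interior_Icc] at ht
      rw [(hg' t).deriv]
      have hb : ⟪f' (x + t • v) - f' x, v⟫ ≤ L * t * ‖v‖ ^ 2 := by
        calc ⟪f' (x + t • v) - f' x, v⟫ ≤ ‖f' (x + t • v) - f' x‖ * ‖v‖ :=
              real_inner_le_norm _ _
          _ ≤ (L * ‖(x + t • v) - x‖) * ‖v‖ :=
              mul_le_mul_of_nonneg_right (hlip _ _) (norm_nonneg _)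
          _ = L * t * ‖v‖ ^ 2 := by
              rw [add_sub_cancel_left, norm_smul, Real.norm_eq_abs, abs_of_pos ht.1]
              ring
      have h5 : ⟪f' (x + t • v), v⟫ - ⟪f' x, v⟫ = ⟪f' (x + t • v) - f' x, v⟫ :=
        (inner_sub_left _ _ _).symm
      linarith
  have h01 := hmono (left_mem_Icc.2 zero_le_one) (right_mem_Icc.2 zero_le_one) zero_le_one
  simp only [hg, one_smul, one_pow, mul_one, zero_smul, add_zero, zero_mul, sub_zero,
    ne_eq, OfNat.ofNat_ne_zero, not_false_eq_true, zero_pow, mul_zero, zero_div] at h01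
  have h1 : x + v = y := by simp [hv]
  rw [h1] at h01
  linarith

lemma gd_cocoercive (L : ℝ) (hL : 0 < L)
    (hconv : ConvexOn ℝ Set.univ f)
    (hdiff : ∀ x : E, HasGradientAt f (f' x) x)
    (hlip : ∀ z₁ z₂ : E, ‖f' z₁ - f' z₂‖ ≤ L * ‖z₁ - z₂‖) (a b : E) :
    ‖f' a - f' b‖ ^ 2 ≤ L * ⟪f' a - f' b, a - b⟫ := by
  have key : ∀ p q : E, f q + ⟪f' q, p - q⟫ + 1 / (2 * L) * ‖f' p - f' q‖ ^ 2 ≤ f p := by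
    intro p q
    set u := f' p - f' q with hu
    set y' := p - (1 / L) • u with hy'
    have h1 := gd_subgrad f f' hconv hdiff q y'
    have h2 := gd_descent f f' L hL hdiff hlip p y'
    have e1 : y' - p = -((1 / L) • u) := by simp [hy']
    have e2 : ⟪f' q, y' - q⟫ = ⟪f' q, p - q⟫ - (1 / L) * ⟪f' q, u⟫ := by
      have : y' - q = (p - q) - (1 / L) • u := by simp [hy']; abel
      rw [this, inner_sub_right, real_inner_smul_right]
    have e3 : ⟪f' p, y' - p⟫ = -((1 / L) * ⟪f' p, u⟫) := by
      rw [e1, inner_neg_right, real_inner_smul_right]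
    have e4 : ‖y' - p‖ ^ 2 = (1 / L) ^ 2 * ‖u‖ ^ 2 := by
      rw [e1, norm_neg, norm_smul, Real.norm_eq_abs, mul_pow, sq_abs]
    have e5 : ⟪f' p, u⟫ - ⟪f' q, u⟫ = ‖u‖ ^ 2 := by
      rw [← inner_sub_left, ← hu, real_inner_self_eq_norm_sq]
    rw [e2] at h1
    rw [e3, e4] at h2
    have hL' : L ≠ 0 := hL.ne'
    have hfin : L / 2 * ((1/L)^2 * ‖u‖^2) = 1 / (2*L) * ‖u‖^2 := by
      field_simp
    have hsplit : (1/L) * ⟪f' p, u⟫ - (1/L) * ⟪f' q, u⟫ = (1/L) * ‖u‖^2 := by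
      rw [← mul_sub, e5]
    have h2L : 1 / L * ‖u‖ ^ 2 - 1 / (2 * L) * ‖u‖ ^ 2 = 1 / (2 * L) * ‖u‖ ^ 2 := by
      field_simp
      ring
    linarith
  have k1 := key a b
  have k2 := key b a
  have e6 : ⟪f' a, b - a⟫ = -⟪f' a, a - b⟫ := by
    rw [← inner_neg_right]; congr 1; abel
  have e7 : ‖f' b - f' a‖ = ‖f' a - f' b‖ := norm_sub_rev _ _
  have e8 : ⟪f' a - f' b, a - b⟫ = ⟪f' a, a - b⟫ - ⟪f' b, a - b⟫ := inner_sub_left _ _ _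
  rw [e6] at k2
  rw [e7] at k2
  have h2L : 0 < 2 * L := by linarith
  have : 2 * (1 / (2 * L)) * ‖f' a - f' b‖ ^ 2 ≤ ⟪f' a - f' b, a - b⟫ := by
    rw [e8]; linarith
  calc ‖f' a - f' b‖ ^ 2 = L * (2 * (1 / (2 * L)) * ‖f' a - f' b‖ ^ 2) := by
        field_simp
    _ ≤ L * ⟪f' a - f' b, a - b⟫ := by
        apply mul_le_mul_of_nonneg_left this hL.le

end Aux

section Aux2
variable {E : Type*} [NormedAddCommGroup E] [InnerProductSpace ℝ E] [CompleteSpace E]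
variable (f : E → ℝ) (f' : E → E)

lemma gd_step_lip (L : ℝ) (hL : 0 < L)
    (hconv : ConvexOn ℝ Set.univ f)
    (hdiff : ∀ x : E, HasGradientAt f (f' x) x)
    (hlip : ∀ z₁ z₂ : E, ‖f' z₁ - f' z₂‖ ≤ L * ‖z₁ - z₂‖)
    (ρ : ℝ) (hρ : 0 < ρ) (a b : E) :
    ‖(a - ρ • f' a) - (b - ρ • f' b)‖ ≤ max 1 (L * ρ - 1) * ‖a - b‖ := by
  set w := a - b with hw
  set u := f' a - f' b with hu
  have hco := gd_cocoercive f f' L hL hconv hdiff hlip a b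
  have hulip : ‖u‖ ≤ L * ‖w‖ := hlip a b
  have hU : ‖u‖ ^ 2 ≤ L ^ 2 * ‖w‖ ^ 2 := by nlinarith [norm_nonneg u, norm_nonneg w]
  have heq : (a - ρ • f' a) - (b - ρ • f' b) = w - ρ • u := by
    simp only [hw, hu, smul_sub]; abel
  rw [heq]
  have hD1 : (1:ℝ) ≤ max 1 (L * ρ - 1) := le_max_left _ _
  have hDn : (0:ℝ) ≤ max 1 (L * ρ - 1) := by linarith
  have hexp : ‖w - ρ • u‖ ^ 2 = ‖w‖ ^ 2 - 2 * ρ * ⟪u, w⟫ + ρ ^ 2 * ‖u‖ ^ 2 := by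
    rw [norm_sub_sq_real, real_inner_smul_right, norm_smul, Real.norm_eq_abs,
      abs_of_pos hρ, real_inner_comm]
    ring
  have hsq : ‖w - ρ • u‖ ^ 2 ≤ (max 1 (L * ρ - 1) * ‖w‖) ^ 2 := by
    rcases le_total (L * ρ) 2 with hc | hc
    · nlinarith [mul_nonneg (mul_nonneg hρ.le (sub_nonneg.2 hc)) (sq_nonneg ‖u‖),
        mul_nonneg hρ.le (sub_nonneg.2 hco),
        mul_nonneg (sub_nonneg.2 hD1)
          (mul_nonneg (by linarith : (0:ℝ) ≤ max 1 (L * ρ - 1) + 1) (sq_nonneg ‖w‖)), hL]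
    · have hmax : max 1 (L * ρ - 1) = L * ρ - 1 := max_eq_right (by linarith)
      rw [hmax]
      nlinarith [mul_nonneg (mul_nonneg hρ.le (by linarith : (0:ℝ) ≤ L * ρ - 2))
          (sub_nonneg.2 hU),
        mul_nonneg hρ.le (sub_nonneg.2 hco), hL]
  nlinarith [hsq, norm_nonneg (w - ρ • u), mul_nonneg hDn (norm_nonneg w)]

end Aux2

/-- Error estimation of iteration processes (Gupta–Roughgarden, Lemma 1):
under Assumption 1, `‖g^j(z, ρ) - g^j(z, η)‖ ≤ (η - ρ) D(ρ)^j L Z / β`. -/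
theorem gd_iteration_error_estimation
    {E : Type*} [NormedAddCommGroup E] [InnerProductSpace ℝ E] [CompleteSpace E]
    (f : E → ℝ) (f' : E → E) (L : ℝ) (hL : 0 < L)
    (hconv : ConvexOn ℝ Set.univ f)
    (hdiff : ∀ x : E, HasGradientAt f (f' x) x)
    (hlip : ∀ z₁ z₂ : E, ‖f' z₁ - f' z₂‖ ≤ L * ‖z₁ - z₂‖)
    (ρl ρu : ℝ) (hρl : 0 < ρl) (hρlu : ρl ≤ ρu)
    (β : ℝ) (hβ : β ∈ Set.Ioo (0 : ℝ) 1)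
    (hcontract : ∀ z : E, ∀ ρ ∈ Set.Icc ρl ρu, ‖z - ρ • f' z‖ ≤ (1 - β) * ‖z‖)
    (hgrad0 : f' 0 = 0)
    (ν Z : ℝ) (hν : 0 < ν) (hνLZ : ν < L * Z)
    (z₀ : E) (hz₀ν : ν < ‖z₀‖) (hz₀Z : ‖z₀‖ ≤ Z) :
    ∀ z : E, ‖z‖ ≤ Z → ∀ j : ℕ, 1 ≤ j →
      ∀ ρ ∈ Set.Icc ρl ρu, ∀ η ∈ Set.Icc ρl ρu, ρ ≤ η →
        ‖gdIter f' ρ j z - gdIter f' η j z‖ ≤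
          (η - ρ) * (max 1 (L * ρ - 1)) ^ j * L * Z / β := by
  intro z hz j hj ρ hρ η hη hρη
  obtain ⟨hβ0, hβ1⟩ := hβ
  have hZ : 0 < Z := by nlinarith
  have hρ0 : 0 < ρ := lt_of_lt_of_le hρl hρ.1
  set D : ℝ := max 1 (L * ρ - 1) with hD
  have hD1 : (1:ℝ) ≤ D := le_max_left _ _
  -- norm of gradient
  have hgnorm : ∀ x : E, ‖f' x‖ ≤ L * ‖x‖ := by
    intro x
    have := hlip x 0
    simpa [hgrad0] using this
  -- decay of iterates
  have hdecay : ∀ n : ℕ, ‖gdIter f' η n z‖ ≤ (1 - β) ^ n * ‖z‖ := by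
    intro n
    induction n with
    | zero => simp [gdIter]
    | succ m ih =>
      calc ‖gdIter f' η (m + 1) z‖ ≤ (1 - β) * ‖gdIter f' η m z‖ := by
            rw [show gdIter f' η (m+1) z
                = gdIter f' η m z - η • f' (gdIter f' η m z) from rfl]
            exact hcontract _ η hη
        _ ≤ (1 - β) * ((1 - β) ^ m * ‖z‖) :=
            mul_le_mul_of_nonneg_left ih (by linarith)
        _ = (1 - β) ^ (m + 1) * ‖z‖ := by ring
  -- key induction
  have key : ∀ n : ℕ, ‖gdIter f' ρ n z - gdIter f' η n z‖ ≤
      (η - ρ) * L * Z * D ^ n * (1 - (1 - β) ^ n) / β := by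
    intro n
    induction n with
    | zero => simp [gdIter]
    | succ m ih =>
      set A := gdIter f' ρ m z with hA
      set B := gdIter f' η m z with hB
      have e1 : gdIter f' ρ (m + 1) z - gdIter f' η (m + 1) z
          = ((A - ρ • f' A) - (B - ρ • f' B)) + (η - ρ) • f' B := by
        rw [show gdIter f' ρ (m+1) z = A - ρ • f' A from rfl,
          show gdIter f' η (m+1) z = B - η • f' B from rfl, sub_smul]
        abel
      have hBnorm : ‖B‖ ≤ (1 - β) ^ m * ‖z‖ := hdecay m
      have hBZ : ‖B‖ ≤ (1 - β) ^ m * Z := by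
        calc ‖B‖ ≤ (1 - β) ^ m * ‖z‖ := hBnorm
          _ ≤ (1 - β) ^ m * Z := by
              apply mul_le_mul_of_nonneg_left hz (pow_nonneg (by linarith) m)
      have step := gd_step_lip f f' L hL hconv hdiff hlip ρ hρ0 A B
      have hfin : ‖gdIter f' ρ (m + 1) z - gdIter f' η (m + 1) z‖
          ≤ D * ‖A - B‖ + (η - ρ) * (L * ((1 - β) ^ m * Z)) := by
        rw [e1]
        calc ‖((A - ρ • f' A) - (B - ρ • f' B)) + (η - ρ) • f' B‖
            ≤ ‖(A - ρ • f' A) - (B - ρ • f' B)‖ + ‖(η - ρ) • f' B‖ := norm_add_le _ _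
          _ ≤ D * ‖A - B‖ + (η - ρ) * (L * ((1 - β) ^ m * Z)) := by
              apply add_le_add step
              rw [norm_smul, Real.norm_eq_abs, abs_of_nonneg (by linarith)]
              apply mul_le_mul_of_nonneg_left _ (by linarith)
              calc ‖f' B‖ ≤ L * ‖B‖ := hgnorm B
                _ ≤ L * ((1 - β) ^ m * Z) := mul_le_mul_of_nonneg_left hBZ hL.le
      have hmid : D * ‖A - B‖ + (η - ρ) * (L * ((1 - β) ^ m * Z))
          ≤ D * ((η - ρ) * L * Z * D ^ m * (1 - (1 - β) ^ m) / β)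
            + (η - ρ) * (L * ((1 - β) ^ m * Z)) := by
        apply add_le_add_left
        exact mul_le_mul_of_nonneg_left ih (by linarith)
      have harith : D * ((η - ρ) * L * Z * D ^ m * (1 - (1 - β) ^ m) / β)
            + (η - ρ) * (L * ((1 - β) ^ m * Z))
          ≤ (η - ρ) * L * Z * D ^ (m + 1) * (1 - (1 - β) ^ (m + 1)) / β := by
        have hc : (0:ℝ) ≤ (η - ρ) * L * Z := by
          apply mul_nonneg (mul_nonneg (by linarith) hL.le) hZ.le
        have he0 : (0:ℝ) ≤ (1 - β) ^ m := pow_nonneg (by linarith) m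
        have hdDm : (1:ℝ) ≤ D ^ m := one_le_pow₀ hD1
        have hdD : (1:ℝ) ≤ D ^ m * D := by
          have := mul_le_mul hdDm hD1 zero_le_one (le_trans zero_le_one hdDm)
          linarith
        have expand : (η - ρ) * L * Z * D ^ (m + 1) * (1 - (1 - β) ^ (m + 1)) / β
            - (D * ((η - ρ) * L * Z * D ^ m * (1 - (1 - β) ^ m) / β)
              + (η - ρ) * (L * ((1 - β) ^ m * Z)))
            = (η - ρ) * L * Z * (1 - β) ^ m * (D ^ m * D - 1) := by
          rw [pow_succ, pow_succ]
          field_simp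
          ring
        have hnn : (0:ℝ) ≤ (η - ρ) * L * Z * (1 - β) ^ m * (D ^ m * D - 1) := by
          apply mul_nonneg (mul_nonneg hc he0) (by linarith)
        linarith
      linarith [hfin, hmid, harith]
  -- conclude
  have hkey := key j
  have he1 : (1 - β) ^ j ≤ 1 := pow_le_one₀ (by linarith) (by linarith)
  have he0 : (0:ℝ) ≤ (1 - β) ^ j := pow_nonneg (by linarith) j
  have hDj : (0:ℝ) ≤ D ^ j := pow_nonneg (by linarith) j
  have hnum : (η - ρ) * L * Z * D ^ j * (1 - (1 - β) ^ j) ≤ (η - ρ) * D ^ j * L * Z := by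
    nlinarith [mul_nonneg (mul_nonneg (mul_nonneg (by linarith : (0:ℝ) ≤ η - ρ) hL.le) hZ.le) hDj]
  calc ‖gdIter f' ρ j z - gdIter f' η j z‖
      ≤ (η - ρ) * L * Z * D ^ j * (1 - (1 - β) ^ j) / β := hkey
    _ ≤ (η - ρ) * D ^ j * L * Z / β := by
        exact div_le_div_of_nonneg_right hnum hβ0.le
end

section
/- Let ρ > 0 and η ≥ 0. For all w, w', y, y' ∈ E, ‖g(w, w', ρ, η) − g(y, y', ρ, η)‖ ≤ (D(ρ) + η)·‖w − y‖ + η·‖w' − y'‖. -/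
open InnerProductSpace Set
open scoped RealInnerProductSpace

section aux
variable {E : Type*} [NormedAddCommGroup E] [InnerProductSpace ℝ E] [CompleteSpace E]

lemma line_hasDerivAt (h : E → ℝ) (h' : E → E) (hdiff : ∀ x : E, HasGradientAt h (h' x) x)
    (x v : E) (t : ℝ) :
    HasDerivAt (fun s : ℝ => h (x + s • v)) ⟪h' (x + t • v), v⟫ t := by
  have hc : HasDerivAt (fun s : ℝ => x + s • v) v t := by
    simpa using ((hasDerivAt_id t).smul_const v).const_add x
  have hf := (hasGradientAt_iff_hasFDerivAt.mp (hdiff (x + t • v)))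
  have := hf.comp_hasDerivAt t hc
  simpa [toDual_apply_apply, Function.comp_def] using this

lemma descent_lemma (h : E → ℝ) (h' : E → E) (L : ℝ) (hL : 0 < L)
    (hdiff : ∀ x : E, HasGradientAt h (h' x) x)
    (hlip : ∀ z₁ z₂ : E, ‖h' z₁ - h' z₂‖ ≤ L * ‖z₁ - z₂‖) (x z : E) :
    h z ≤ h x + ⟪h' x, z - x⟫ + L / 2 * ‖z - x‖ ^ 2 := by
  set v := z - x with hv
  set φ : ℝ → ℝ := fun t => h (x + t • v) - t * ⟪h' x, v⟫ - L / 2 * t ^ 2 * ‖v‖ ^ 2 with hφ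
  have hder : ∀ t : ℝ, HasDerivAt φ (⟪h' (x + t • v) - h' x, v⟫ - L * t * ‖v‖ ^ 2) t := by
    intro t
    have h1 := line_hasDerivAt h h' hdiff x v t
    have h2 : HasDerivAt (fun t : ℝ => t * ⟪h' x, v⟫) ⟪h' x, v⟫ t := by
      simpa using (hasDerivAt_id t).mul_const (⟪h' x, v⟫)
    have h3 : HasDerivAt (fun t : ℝ => L / 2 * t ^ 2 * ‖v‖ ^ 2) (L * t * ‖v‖ ^ 2) t := by
      have := ((hasDerivAt_pow 2 t).const_mul (L / 2)).mul_const (‖v‖ ^ 2)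
      exact this.congr_deriv (by rw [show (2:ℕ) - 1 = 1 from rfl]; push_cast; ring)
    have := (h1.sub h2).sub h3
    exact this.congr_deriv (by rw [inner_sub_left])
  have hanti : AntitoneOn φ (Icc (0:ℝ) 1) := by
    apply antitoneOn_of_deriv_nonpos (convex_Icc 0 1)
    · exact fun t _ => ((hder t).continuousAt).continuousWithinAt
    · exact fun t _ => ((hder t).differentiableAt).differentiableWithinAt
    · intro t ht
      rw [interior_Icc] at ht
      rw [(hder t).deriv]
      have hcs : ⟪h' (x + t • v) - h' x, v⟫ ≤ ‖h' (x + t • v) - h' x‖ * ‖v‖ :=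
        real_inner_le_norm _ _
      have hl : ‖h' (x + t • v) - h' x‖ ≤ L * (t * ‖v‖) := by
        have := hlip (x + t • v) x
        simpa [norm_smul, abs_of_nonneg ht.1.le] using this
      nlinarith [norm_nonneg v, norm_nonneg (h' (x + t • v) - h' x), ht.1.le, hL]
  have key := hanti (left_mem_Icc.mpr zero_le_one) (right_mem_Icc.mpr zero_le_one) zero_le_one
  simp only [hφ, zero_smul, add_zero, one_smul] at key
  have hxz : x + v = z := by rw [hv]; abel
  rw [hxz] at key
  nlinarith [key]

lemma grad_ineq (f : E → ℝ) (f' : E → E) (hconv : ConvexOn ℝ Set.univ f)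
    (hdiff : ∀ x : E, HasGradientAt f (f' x) x) (x z : E) :
    f x + ⟪f' x, z - x⟫ ≤ f z := by
  set v := z - x with hv
  set g : ℝ → ℝ := fun t => f (x + t • v) with hg
  have hgconv : ConvexOn ℝ Set.univ g := by
    refine ⟨convex_univ, fun s _ t _ a b ha hb hab => ?_⟩
    have key : x + (a * s + b * t) • v = a • (x + s • v) + b • (x + t • v) := by
      have : a • (x + s • v) + b • (x + t • v) = (a + b) • x + (a * s + b * t) • v := by
        module
      rw [this, hab, one_smul]
    rw [hg]; simp only [smul_eq_mul]
    rw [key]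
    exact hconv.2 (mem_univ _) (mem_univ _) ha hb hab
  have hder := line_hasDerivAt f f' hdiff x v 0
  have hslope := hgconv.le_slope_of_hasDerivAt (mem_univ (0:ℝ)) (mem_univ (1:ℝ)) one_pos
    (by simpa using hder)
  have hxz : x + v = z := by rw [hv]; abel
  have : g 0 = f x := by simp [hg]
  have h1 : g 1 = f z := by simp [hg, hxz]
  rw [slope_def_field] at hslope
  simp only [zero_smul, add_zero] at hder
  simp [hg, hxz] at hslope
  linarith [hslope]

lemma cocoercive (f : E → ℝ) (f' : E → E) (L : ℝ) (hL : 0 < L)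
    (hconv : ConvexOn ℝ Set.univ f)
    (hdiff : ∀ x : E, HasGradientAt f (f' x) x)
    (hlip : ∀ z₁ z₂ : E, ‖f' z₁ - f' z₂‖ ≤ L * ‖z₁ - z₂‖) (w y : E) :
    L⁻¹ * ‖f' w - f' y‖ ^ 2 ≤ ⟪f' w - f' y, w - y⟫ := by
  -- the key one-sided estimate
  have main : ∀ a b : E,
      f a - ⟪f' a, a⟫ ≤ f b - ⟪f' a, b⟫ - (2 * L)⁻¹ * ‖f' b - f' a‖ ^ 2 := by
    intro a b
    set φ : E → ℝ := fun z => f z - ⟪f' a, z⟫ with hφdef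
    set φ' : E → E := fun z => f' z - f' a with hφ'def
    have hφdiff : ∀ z : E, HasGradientAt φ (φ' z) z := by
      intro z
      rw [hasGradientAt_iff_hasFDerivAt]
      have h1 : HasFDerivAt (fun z : E => (⟪f' a, z⟫ : ℝ)) (toDual ℝ E (f' a)) z := by
        have e : (fun z : E => (⟪f' a, z⟫ : ℝ)) = ⇑(toDual ℝ E (f' a)) := by
          ext y; simp [toDual_apply_apply]
        rw [e]; exact (toDual ℝ E (f' a)).hasFDerivAt (x := z)
      have h2 := (hasGradientAt_iff_hasFDerivAt.mp (hdiff z)).sub h1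
      rw [hφ'def]; simp only
      rw [map_sub]
      exact h2
    have hφlip : ∀ z₁ z₂ : E, ‖φ' z₁ - φ' z₂‖ ≤ L * ‖z₁ - z₂‖ := by
      intro z₁ z₂
      simpa [hφ'def, sub_sub_sub_cancel_right] using hlip z₁ z₂
    set z := b - L⁻¹ • (f' b - f' a) with hz
    have hdesc := descent_lemma φ φ' L hL hφdiff hφlip b z
    have hgi := grad_ineq f f' hconv hdiff a z
    have hφaz : φ a ≤ φ z := by
      have h2 : ⟪f' a, z - a⟫ = ⟪f' a, z⟫ - ⟪f' a, a⟫ := inner_sub_right _ _ _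
      simp only [hφdef]
      linarith [hgi, h2]
    have hzb : z - b = -(L⁻¹ • (f' b - f' a)) := by rw [hz]; abel
    have hi1 : ⟪φ' b, z - b⟫ = -(L⁻¹ * ‖f' b - f' a‖ ^ 2) := by
      rw [hzb, hφ'def]
      simp only
      rw [inner_neg_right, real_inner_smul_right, real_inner_self_eq_norm_sq]
    have hn1 : ‖z - b‖ ^ 2 = L⁻¹ ^ 2 * ‖f' b - f' a‖ ^ 2 := by
      rw [hzb, norm_neg, norm_smul]
      simp [abs_of_nonneg (inv_nonneg.mpr hL.le), mul_pow]
    rw [hi1, hn1] at hdesc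
    have hL' : L ≠ 0 := hL.ne'
    have h2L : L / 2 * (L⁻¹ ^ 2 * ‖f' b - f' a‖ ^ 2) = (2 * L)⁻¹ * ‖f' b - f' a‖ ^ 2 := by
      field_simp
    rw [h2L] at hdesc
    have := le_trans hφaz hdesc
    simp only [hφdef] at this
    have hrel : L⁻¹ * ‖f' b - f' a‖ ^ 2 = 2 * ((2 * L)⁻¹ * ‖f' b - f' a‖ ^ 2) := by
      field_simp
    linarith
  have h1 := main w y
  have h2 := main y w
  have e1 : ‖f' y - f' w‖ = ‖f' w - f' y‖ := norm_sub_rev _ _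
  have e2 : ⟪f' w - f' y, w - y⟫ =
      ⟪f' w, w⟫ - ⟪f' w, y⟫ - ⟪f' y, w⟫ + ⟪f' y, y⟫ := by
    rw [inner_sub_left, inner_sub_right, inner_sub_right]; ring
  rw [e1] at h1
  have hL' : (2 * L)⁻¹ + (2 * L)⁻¹ = L⁻¹ := by
    ring
  nlinarith [h1, h2]
end aux

set_option maxHeartbeats 1000000 in

/-- Lipschitz continuity of the conjugate-gradient update map (Lemma 3):
`g(z, z', ρ, η) = z - ρ∇f(z) - η(z - z')` satisfies
`‖g(w, w', ρ, η) - g(y, y', ρ, η)‖ ≤ (D(ρ) + η)‖w - y‖ + η‖w' - y'‖`. -/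
theorem cg_one_step_lipschitz
    {E : Type*} [NormedAddCommGroup E] [InnerProductSpace ℝ E] [CompleteSpace E]
    (f : E → ℝ) (f' : E → E) (L : ℝ) (hL : 0 < L)
    (hconv : ConvexOn ℝ Set.univ f)
    (hdiff : ∀ x : E, HasGradientAt f (f' x) x)
    (hlip : ∀ z₁ z₂ : E, ‖f' z₁ - f' z₂‖ ≤ L * ‖z₁ - z₂‖)
    (ρ η : ℝ) (hρ : 0 < ρ) (hη : 0 ≤ η) :
    ∀ w w' y y' : E,
      ‖(w - ρ • f' w - η • (w - w')) - (y - ρ • f' y - η • (y - y'))‖ ≤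
        (max 1 (L * ρ - 1) + η) * ‖w - y‖ + η * ‖w' - y'‖ := by
  intro w w' y y'
  set G := f' w - f' y with hG
  set M := max 1 (L * ρ - 1) with hM
  have hM1 : (1:ℝ) ≤ M := le_max_left _ _
  have hco := cocoercive f f' L hL hconv hdiff hlip w y
  have hco' : ‖G‖ ^ 2 ≤ L * ⟪G, w - y⟫ := by
    have h := mul_le_mul_of_nonneg_left hco hL.le
    rwa [← mul_assoc, mul_inv_cancel₀ hL.ne', one_mul] at h
  have hipos : 0 ≤ ⟪G, w - y⟫ := by
    have : 0 ≤ L⁻¹ * ‖G‖ ^ 2 := by positivity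
    linarith [hco]
  have hGle : ‖G‖ ≤ L * ‖w - y‖ := hlip w y
  have hg2 : ‖G‖ ^ 2 ≤ L ^ 2 * ‖w - y‖ ^ 2 := by
    nlinarith [norm_nonneg G, norm_nonneg (w - y)]
  have key : ‖(w - y) - ρ • G‖ ≤ M * ‖w - y‖ := by
    have hsq : ‖(w - y) - ρ • G‖ ^ 2
        = ‖w - y‖ ^ 2 - 2 * ρ * ⟪G, w - y⟫ + ρ ^ 2 * ‖G‖ ^ 2 := by
      rw [norm_sub_sq_real, real_inner_smul_right, norm_smul, real_inner_comm]
      rw [Real.norm_eq_abs, abs_of_pos hρ, mul_pow]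
      ring
    have hrhs : 0 ≤ M * ‖w - y‖ := mul_nonneg (by linarith) (norm_nonneg _)
    refine le_of_pow_le_pow_left₀ two_ne_zero hrhs ?_
    rw [mul_pow, hsq]
    have hM2 : (1:ℝ) ≤ M ^ 2 := by nlinarith
    have hd2 : ‖w - y‖ ^ 2 ≤ M ^ 2 * ‖w - y‖ ^ 2 := by
      nlinarith [sq_nonneg ‖w - y‖]
    rcases le_or_gt (ρ * L) 2 with hc | hc
    · nlinarith [mul_le_mul_of_nonneg_left hco' (mul_nonneg hρ.le hρ.le),
        mul_nonneg hρ.le (mul_nonneg hipos (sub_nonneg.mpr hc))]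
    · have hMr : M = L * ρ - 1 := max_eq_right (by nlinarith)
      rw [hMr]
      nlinarith [mul_le_mul_of_nonneg_left hco' (by positivity : (0:ℝ) ≤ 2 * ρ),
        mul_nonneg (mul_nonneg hρ.le (by nlinarith : (0:ℝ) ≤ ρ * L - 2))
          (by nlinarith : 0 ≤ L ^ 2 * ‖w - y‖ ^ 2 - ‖G‖ ^ 2), hL, hρ,
        mul_pos hL hρ]
  have decomp : (w - ρ • f' w - η • (w - w')) - (y - ρ • f' y - η • (y - y'))
      = ((w - y) - ρ • G) + (-(η • (w - y)) + η • (w' - y')) := by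
    rw [hG]; module
  rw [decomp]
  have t1 := norm_add_le ((w - y) - ρ • G) (-(η • (w - y)) + η • (w' - y'))
  have t2 := norm_add_le (-(η • (w - y))) (η • (w' - y'))
  have e1 : ‖-(η • (w - y))‖ = η * ‖w - y‖ := by
    rw [norm_neg, norm_smul, Real.norm_eq_abs, abs_of_nonneg hη]
  have e2 : ‖η • (w' - y')‖ = η * ‖w' - y'‖ := by
    rw [norm_smul, Real.norm_eq_abs, abs_of_nonneg hη]
  rw [e1, e2] at t2
  nlinarith [key, t1, t2]
end

section
/- Under Assumption 2, let η ∈ [η_l, η_u], let ρ₁, ρ₂ ∈ [ρ_l, ρ_u] with ρ₁ ≤ ρ₂, and let (z_j) and (z'_j) be the CG iteration processes from the same initial point z₀ with parameters (ρ₁, η) and (ρ₂, η), respectively. Then for every integer j ≥ 2, ‖z_j − z'_j‖ ≤ (ρ₂ − ρ₁)·G(ρ₁, η, j). -/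
open RealInnerProductSpace Set Topology Filter

open RealInnerProductSpace Set Topology Filter



lemma cg_line_deriv {E : Type*} [NormedAddCommGroup E] [InnerProductSpace ℝ E] [CompleteSpace E] (f : E → ℝ) (f' : E → E) (hdiff : ∀ x, HasGradientAt f (f' x) x)
    (x v : E) (t : ℝ) :
    HasDerivAt (fun s : ℝ => f (x + s • v)) (⟪f' (x + t • v), v⟫) t := by
  have hline : HasDerivAt (fun s : ℝ => x + s • v) v t := by
    simpa using ((hasDerivAt_id t).smul_const v).const_add x
  have hf : HasFDerivAt f (InnerProductSpace.toDual ℝ E (f' (x + t • v))) (x + t • v) :=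
    hdiff (x + t • v)
  simpa [Function.comp_def] using hf.comp_hasDerivAt t hline

lemma cg_descent {E : Type*} [NormedAddCommGroup E] [InnerProductSpace ℝ E] [CompleteSpace E] (f : E → ℝ) (f' : E → E) (L : ℝ) (hL : 0 < L)
    (hdiff : ∀ x, HasGradientAt f (f' x) x)
    (hlip : ∀ z₁ z₂ : E, ‖f' z₁ - f' z₂‖ ≤ L * ‖z₁ - z₂‖)
    (x v : E) : f (x + v) ≤ f x + ⟪f' x, v⟫ + L / 2 * ‖v‖ ^ 2 := by
  have hcontf' : Continuous f' := by
    have : LipschitzWith L.toNNReal f' := by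
      apply LipschitzWith.of_dist_le_mul
      intro a b
      simpa [dist_eq_norm, Real.coe_toNNReal L hL.le] using hlip a b
    exact this.continuous
  have hcont : Continuous fun t : ℝ => (⟪f' (x + t • v), v⟫ : ℝ) := by
    exact Continuous.inner (hcontf'.comp (by continuity)) continuous_const
  have hftc : ∫ t in (0:ℝ)..1, (⟪f' (x + t • v), v⟫ : ℝ) = f (x + v) - f x := by
    have := intervalIntegral.integral_eq_sub_of_hasDerivAt
      (f := fun s : ℝ => f (x + s • v))
      (f' := fun t : ℝ => (⟪f' (x + t • v), v⟫ : ℝ))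
      (a := 0) (b := 1)
      (fun t _ => cg_line_deriv f f' hdiff x v t) (hcont.intervalIntegrable 0 1)
    simpa using this
  have hmono : ∫ t in (0:ℝ)..1, (⟪f' (x + t • v), v⟫ : ℝ) ≤
      ∫ t in (0:ℝ)..1, (⟪f' x, v⟫ + L * ‖v‖ ^ 2 * t) := by
    apply intervalIntegral.integral_mono_on (by norm_num) (hcont.intervalIntegrable 0 1)
      ((by continuity : Continuous fun t : ℝ => (⟪f' x, v⟫ + L * ‖v‖ ^ 2 * t)).intervalIntegrable 0 1)
    intro t ht
    have h1 : (⟪f' (x + t • v) - f' x, v⟫ : ℝ) ≤ L * ‖v‖ ^ 2 * t := by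
      calc (⟪f' (x + t • v) - f' x, v⟫ : ℝ) ≤ ‖f' (x + t • v) - f' x‖ * ‖v‖ :=
            real_inner_le_norm _ _
        _ ≤ L * ‖x + t • v - x‖ * ‖v‖ := by
            gcongr; exact hlip _ _
        _ = L * ‖v‖ ^ 2 * t := by
            simp [norm_smul, abs_of_nonneg ht.1]; ring
    have h2 : (⟪f' (x + t • v) - f' x, v⟫ : ℝ) = ⟪f' (x + t • v), v⟫ - ⟪f' x, v⟫ := by
      simp [inner_sub_left]
    linarith
  have hval : ∫ t in (0:ℝ)..1, (⟪f' x, v⟫ + L * ‖v‖ ^ 2 * t) =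
      ⟪f' x, v⟫ + L / 2 * ‖v‖ ^ 2 := by
    have hi : IntervalIntegrable (fun t : ℝ => L * ‖v‖ ^ 2 * t) MeasureTheory.volume 0 1 := by
      apply Continuous.intervalIntegrable; continuity
    rw [intervalIntegral.integral_add (intervalIntegrable_const) hi,
      intervalIntegral.integral_const_mul, integral_id]
    simp
    ring
  linarith [hftc ▸ hmono, hval ▸ hmono]

lemma cg_grad_ineq {E : Type*} [NormedAddCommGroup E] [InnerProductSpace ℝ E] [CompleteSpace E] (f : E → ℝ) (f' : E → E) (hconv : ConvexOn ℝ Set.univ f)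
    (hdiff : ∀ x, HasGradientAt f (f' x) x) (x y : E) :
    ⟪f' x, y - x⟫ ≤ f y - f x := by
  set v := y - x with hv
  have hg0 : HasDerivAt (fun s : ℝ => f (x + s • v)) (⟪f' x, v⟫) 0 := by
    simpa using cg_line_deriv f f' hdiff x v 0
  rw [hasDerivAt_iff_tendsto_slope] at hg0
  have hg0' : Filter.Tendsto (slope (fun s : ℝ => f (x + s • v)) 0) (𝓝[>] (0:ℝ))
      (𝓝 (⟪f' x, v⟫)) :=
    hg0.mono_left (nhdsWithin_mono 0 (fun t ht => ne_of_gt ht))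
  refine le_of_tendsto hg0' ?_
  filter_upwards [Ioo_mem_nhdsGT_of_mem (show (0:ℝ) ∈ Ico (0:ℝ) 1 by norm_num)] with t ht
  have ht0 : 0 < t := ht.1
  have ht1 : t < 1 := ht.2
  have hcx : f (x + t • v) ≤ (1 - t) * f x + t * f y := by
    have h := hconv.2 (mem_univ x) (mem_univ y) (by linarith : (0:ℝ) ≤ 1 - t)
      (le_of_lt ht0) (by ring)
    have hxy : (1 - t) • x + t • y = x + t • v := by
      rw [hv]; module
    rwa [hxy] at h
  rw [slope_def_field]
  simp only [sub_zero, zero_smul, add_zero]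
  rw [div_le_iff₀ ht0]
  nlinarith

lemma cg_lower {E : Type*} [NormedAddCommGroup E] [InnerProductSpace ℝ E] [CompleteSpace E] (f : E → ℝ) (f' : E → E) (L : ℝ) (hL : 0 < L)
    (hconv : ConvexOn ℝ Set.univ f)
    (hdiff : ∀ x, HasGradientAt f (f' x) x)
    (hlip : ∀ z₁ z₂ : E, ‖f' z₁ - f' z₂‖ ≤ L * ‖z₁ - z₂‖)
    (x y : E) :
    f y + ⟪f' y, x - y⟫ + 1 / (2 * L) * ‖f' x - f' y‖ ^ 2 ≤ f x := by
  set Δ := f' x - f' y with hΔ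
  set v := -((1/L) • Δ) with hvdef
  have hdesc := cg_descent f f' L hL hdiff hlip x v
  have hgi := cg_grad_ineq f f' hconv hdiff y (x + v)
  have e1 : (⟪f' x, v⟫ : ℝ) = -(1/L) * ⟪f' x, Δ⟫ := by
    rw [hvdef, inner_neg_right, real_inner_smul_right]; ring
  have e2 : ‖v‖ ^ 2 = (1/L)^2 * ‖Δ‖^2 := by
    rw [hvdef, norm_neg, norm_smul, Real.norm_eq_abs,
      abs_of_pos (show (0:ℝ) < 1/L by positivity)]
    ring
  have e3 : (⟪f' y, x + v - y⟫ : ℝ) = ⟪f' y, x - y⟫ - (1/L) * ⟪f' y, Δ⟫ := by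
    have : x + v - y = (x - y) + v := by abel
    rw [this, inner_add_right, hvdef, inner_neg_right, real_inner_smul_right]; ring
  have e4 : (⟪f' x, Δ⟫ : ℝ) - ⟪f' y, Δ⟫ = ‖Δ‖^2 := by
    rw [← inner_sub_left, ← hΔ, real_inner_self_eq_norm_sq]
  rw [e1, e2] at hdesc
  rw [e3] at hgi
  have e5 : (1/L) * (⟪f' x, Δ⟫ - ⟪f' y, Δ⟫) = (1/L) * ‖Δ‖^2 := by rw [e4]
  have e6 : L/2 * ((1/L)^2 * ‖Δ‖^2) = 1/(2*L) * ‖Δ‖^2 := by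
    field_simp
  have e7 : (1/L) * (⟪f' x, Δ⟫ - ⟪f' y, Δ⟫) = (1/L) * ⟪f' x, Δ⟫ - (1/L) * ⟪f' y, Δ⟫ := by ring
  have e8 : 1/(2*L) * ‖Δ‖^2 + 1/(2*L) * ‖Δ‖^2 = 1/L * ‖Δ‖^2 := by field_simp; ring
  linarith [hdesc, hgi, e5, e6, e7, e8]

lemma cg_coco {E : Type*} [NormedAddCommGroup E] [InnerProductSpace ℝ E] [CompleteSpace E] (f : E → ℝ) (f' : E → E) (L : ℝ) (hL : 0 < L)
    (hconv : ConvexOn ℝ Set.univ f)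
    (hdiff : ∀ x, HasGradientAt f (f' x) x)
    (hlip : ∀ z₁ z₂ : E, ‖f' z₁ - f' z₂‖ ≤ L * ‖z₁ - z₂‖)
    (x y : E) :
    (1 / L) * ‖f' x - f' y‖ ^ 2 ≤ ⟪f' x - f' y, x - y⟫ := by
  have h1 := cg_lower f f' L hL hconv hdiff hlip x y
  have h2 := cg_lower f f' L hL hconv hdiff hlip y x
  have e1 : (⟪f' x - f' y, x - y⟫ : ℝ) = ⟪f' x, y - x⟫ * (-1) + ⟪f' y, x - y⟫ * (-1) := by
    rw [inner_sub_left]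
    have a1 : (⟪f' x, y - x⟫ : ℝ) = - ⟪f' x, x - y⟫ := by
      rw [← inner_neg_right]; congr 1; abel
    rw [a1]; ring
  have e2 : ‖f' y - f' x‖ = ‖f' x - f' y‖ := norm_sub_rev _ _
  rw [e2] at h2
  have e7 : 1/(2*L) * ‖f' x - f' y‖^2 + 1/(2*L) * ‖f' x - f' y‖^2
      = 1/L * ‖f' x - f' y‖^2 := by field_simp; ring
  linarith [h1, h2, e1, e7]

lemma cg_contraction {E : Type*} [NormedAddCommGroup E] [InnerProductSpace ℝ E] [CompleteSpace E] (f : E → ℝ) (f' : E → E) (L : ℝ) (hL : 0 < L)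
    (hconv : ConvexOn ℝ Set.univ f)
    (hdiff : ∀ x, HasGradientAt f (f' x) x)
    (hlip : ∀ z₁ z₂ : E, ‖f' z₁ - f' z₂‖ ≤ L * ‖z₁ - z₂‖)
    (ρ : ℝ) (hρ : 0 < ρ) (x y : E) :
    ‖(x - ρ • f' x) - (y - ρ • f' y)‖ ≤ max 1 (L * ρ - 1) * ‖x - y‖ := by
  set d := x - y with hd
  set Δ := f' x - f' y with hΔdef
  set D := max 1 (L * ρ - 1) with hDdef
  have hD1 : (1:ℝ) ≤ D := le_max_left _ _
  have hD0 : (0:ℝ) ≤ D := by linarith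
  have hvec : (x - ρ • f' x) - (y - ρ • f' y) = d - ρ • Δ := by
    rw [hd, hΔdef]; module
  have hsq : ‖d - ρ • Δ‖ ^ 2 = ‖d‖^2 - 2 * ρ * ⟪d, Δ⟫ + ρ^2 * ‖Δ‖^2 := by
    rw [@norm_sub_sq_real E, real_inner_smul_right, norm_smul, Real.norm_eq_abs,
      abs_of_pos hρ]
    ring
  have hco : (1 / L) * ‖Δ‖ ^ 2 ≤ ⟪Δ, d⟫ := cg_coco f f' L hL hconv hdiff hlip x y
  have hcomm : (⟪d, Δ⟫ : ℝ) = ⟪Δ, d⟫ := real_inner_comm _ _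
  have hΔd : ‖Δ‖ ≤ L * ‖d‖ := hlip x y
  have hbound : ‖d - ρ • Δ‖ ^ 2 ≤ (D * ‖d‖) ^ 2 := by
    rcases le_total (L * ρ) 2 with hc | hc
    · have h1 : 2 * ρ * ⟪d, Δ⟫ ≥ 2 * ρ * ((1/L) * ‖Δ‖^2) := by
        rw [hcomm]; apply mul_le_mul_of_nonneg_left hco (by positivity)
      have h2e : ρ^2 * ‖Δ‖^2 - 2 * ρ * ((1/L) * ‖Δ‖^2) = (ρ * ‖Δ‖^2 / L) * (L*ρ - 2) := by
        field_simp
      have h2 : ρ^2 * ‖Δ‖^2 - 2 * ρ * ((1/L) * ‖Δ‖^2) ≤ 0 := by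
        rw [h2e]
        exact mul_nonpos_of_nonneg_of_nonpos (by positivity) (by linarith)
      have hD2 : ‖d‖^2 ≤ D^2 * ‖d‖^2 := by
        nlinarith [mul_nonneg (show (0:ℝ) ≤ D^2 - 1 by nlinarith) (sq_nonneg ‖d‖)]
      linarith [hsq, h1, h2, hD2]
    · have hDeq : D = L * ρ - 1 := max_eq_right (by linarith)
      have h1 : 2 * ρ * ⟪d, Δ⟫ ≥ 2 * ρ * ((1/L) * ‖Δ‖^2) := by
        rw [hcomm]; apply mul_le_mul_of_nonneg_left hco (by positivity)
      have hkey : ρ^2 * ‖Δ‖^2 - 2 * ρ * ((1/L) * ‖Δ‖^2) ≤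
          (ρ^2 - 2 * ρ / L) * (L^2 * ‖d‖^2) := by
        have hcoef : 0 ≤ ρ^2 - 2 * ρ / L := by
          rw [sub_nonneg, div_le_iff₀ hL]
          nlinarith [mul_le_mul_of_nonneg_left hc hρ.le]
        have hΔ2 : ‖Δ‖^2 ≤ L^2 * ‖d‖^2 := by nlinarith [norm_nonneg Δ, norm_nonneg d]
        calc ρ^2 * ‖Δ‖^2 - 2 * ρ * ((1/L) * ‖Δ‖^2) = (ρ^2 - 2 * ρ / L) * ‖Δ‖^2 := by ring
          _ ≤ (ρ^2 - 2 * ρ / L) * (L^2 * ‖d‖^2) := by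
              apply mul_le_mul_of_nonneg_left hΔ2 hcoef
      have hfin : ‖d‖^2 + (ρ^2 - 2 * ρ / L) * (L^2 * ‖d‖^2) = (L*ρ - 1)^2 * ‖d‖^2 := by
        field_simp
        ring
      rw [hDeq]
      linarith [h1, hkey, hfin, hsq]
  rw [hvec]
  have := Real.sqrt_le_sqrt hbound
  rwa [Real.sqrt_sq (norm_nonneg _), Real.sqrt_sq (by positivity)] at this

set_option maxHeartbeats 2000000 in



/-- Iteration error estimation fixing the conjugate parameter `η` (Lemma 4):
for CG processes `z` (with step size `ρ₁`) and `z'` (with step size `ρ₂`) started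
from the same point `z₀`, `‖z_j - z'_j‖ ≤ (ρ₂ - ρ₁) · G(ρ₁, η, j)` for all `j ≥ 2`. -/
theorem cg_iteration_error_fix_eta
    {E : Type*} [NormedAddCommGroup E] [InnerProductSpace ℝ E] [CompleteSpace E]
    (f : E → ℝ) (f' : E → E) (L : ℝ) (hL : 0 < L)
    (hconv : ConvexOn ℝ Set.univ f)
    (hdiff : ∀ x : E, HasGradientAt f (f' x) x)
    (hlip : ∀ z₁ z₂ : E, ‖f' z₁ - f' z₂‖ ≤ L * ‖z₁ - z₂‖)
    -- Assumption 2
    (ρl ρu ηl ηu : ℝ) (hρl : 0 < ρl) (hρlu : ρl ≤ ρu) (hηl : 0 < ηl) (hηlu : ηl ≤ ηu)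
    (β : ℝ) (hβ : β ∈ Set.Ioo (0 : ℝ) 1)
    (ν Z : ℝ) (hν : 0 < ν) (hνLZ : ν < L * Z)
    (hgrad0 : f' 0 = 0)
    (z₀ : E) (hz₀ν : ν < ‖z₀‖) (hz₀Z : ‖z₀‖ ≤ Z)
    -- parameters
    (η : ℝ) (hη : η ∈ Set.Icc ηl ηu)
    (ρ₁ ρ₂ : ℝ) (hρ₁ : ρ₁ ∈ Set.Icc ρl ρu) (hρ₂ : ρ₂ ∈ Set.Icc ρl ρu) (hρ : ρ₁ ≤ ρ₂)
    -- the two CG iteration processes from z₀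
    (z z' : ℕ → E)
    (hz0 : z 0 = z₀) (hz'0 : z' 0 = z₀)
    (hz1 : z 1 = z₀ - ρ₁ • f' z₀) (hz'1 : z' 1 = z₀ - ρ₂ • f' z₀)
    (hzrec : ∀ n : ℕ, z (n + 2) = z (n + 1) - ρ₁ • f' (z (n + 1)) - η • (z (n + 1) - z n))
    (hz'rec : ∀ n : ℕ, z' (n + 2) = z' (n + 1) - ρ₂ • f' (z' (n + 1)) - η • (z' (n + 1) - z' n))
    (hcz : ∀ n : ℕ, ‖z (n + 1)‖ ≤ (1 - β) * ‖z n‖)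
    (hcz' : ∀ n : ℕ, ‖z' (n + 1)‖ ≤ (1 - β) * ‖z' n‖)
    -- the roots of the characteristic equation and the constants of G
    (r₁ r₂ : ℝ) (hr : r₂ < r₁)
    (hr₁ : r₁ ^ 2 - (max 1 (L * ρ₁ - 1) + η) * r₁ - η = 0)
    (hr₂ : r₂ ^ 2 - (max 1 (L * ρ₁ - 1) + η) * r₂ - η = 0)
    (Δ R₀ R₁ : ℝ)
    (hΔ : Δ = (max 1 (L * ρ₁ - 1) + η) * (1 - β) + η - (1 - β) ^ 2)
    (hR₀ : R₀ = L * Z * (1 - β) ^ 2 / Δ)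
    (hR₁ : R₁ = max 1 (L * ρ₁ - 1) * L * Z / β + L * Z * (1 - β) ^ 3 / Δ)
    (G : ℕ → ℝ)
    (hG : ∀ j : ℕ, G j = ((R₀ * r₂ - R₁) / (r₂ - r₁)) * r₁ ^ j +
      ((R₀ * r₁ - R₁) / (r₁ - r₂)) * r₂ ^ j - L * Z * (1 - β) ^ (j + 2) / Δ) :
    ∀ j : ℕ, 2 ≤ j → ‖z j - z' j‖ ≤ (ρ₂ - ρ₁) * G j := by
  obtain ⟨hβ0, hβ1⟩ := hβ
  set D := max 1 (L * ρ₁ - 1) with hDdef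
  set q := 1 - β with hqdef
  have hD1 : (1:ℝ) ≤ D := le_max_left _ _
  clear_value D
  have hq0 : 0 < q := by rw [hqdef]; linarith
  have hq1 : q < 1 := by rw [hqdef]; linarith
  have hβq : β + q = 1 := by rw [hqdef]; ring
  clear_value q
  have hLZ : 0 < L * Z := lt_trans hν hνLZ
  have hZ0 : 0 < Z := by nlinarith [hLZ, hL]
  have hηpos : 0 < η := lt_of_lt_of_le hηl hη.1
  have hρ₁pos : 0 < ρ₁ := lt_of_lt_of_le hρl hρ₁.1
  have hδ : 0 ≤ ρ₂ - ρ₁ := sub_nonneg.2 hρ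
  have hΔpos : 0 < Δ := by
    rw [hΔ]
    nlinarith [mul_pos hηpos hq0, mul_nonneg (sub_nonneg.2 hD1) hq0.le]
  have hΔne : Δ ≠ 0 := hΔpos.ne'
  have hβne : β ≠ 0 := hβ0.ne'
  have hr12 : r₁ - r₂ ≠ 0 := sub_ne_zero.2 hr.ne'
  have hr21 : r₂ - r₁ ≠ 0 := sub_ne_zero.2 hr.ne
  -- decay of the second process
  have hdecay' : ∀ n, ‖z' n‖ ≤ q ^ n * Z := by
    intro n
    induction n with
    | zero => simpa [hz'0] using hz₀Z
    | succ m ih =>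
      calc ‖z' (m+1)‖ ≤ q * ‖z' m‖ := hcz' m
        _ ≤ q * (q ^ m * Z) := mul_le_mul_of_nonneg_left ih hq0.le
        _ = q ^ (m+1) * Z := by ring
  -- gradient norm bound
  have hgradle : ∀ w : E, ‖f' w‖ ≤ L * ‖w‖ := by
    intro w
    have := hlip w 0
    rwa [hgrad0, sub_zero, sub_zero] at this
  -- the error recurrence
  have herec : ∀ n : ℕ, ‖z (n+2) - z' (n+2)‖ ≤
      (D + η) * ‖z (n+1) - z' (n+1)‖ + η * ‖z n - z' n‖ + (ρ₂ - ρ₁) * (L * Z * q ^ (n+1)) := by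
    intro n
    have hsplit : z (n+2) - z' (n+2) =
        ((z (n+1) - ρ₁ • f' (z (n+1))) - (z' (n+1) - ρ₁ • f' (z' (n+1))))
        + (ρ₂ - ρ₁) • f' (z' (n+1))
        - η • (z (n+1) - z' (n+1)) + η • (z n - z' n) := by
      rw [hzrec n, hz'rec n]; module
    have h1 : ‖(z (n+1) - ρ₁ • f' (z (n+1))) - (z' (n+1) - ρ₁ • f' (z' (n+1)))‖ ≤
        D * ‖z (n+1) - z' (n+1)‖ := by
      rw [hDdef]; exact cg_contraction f f' L hL hconv hdiff hlip ρ₁ hρ₁pos _ _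
    have h2 : ‖f' (z' (n+1))‖ ≤ L * Z * q ^ (n+1) := by
      calc ‖f' (z' (n+1))‖ ≤ L * ‖z' (n+1)‖ := hgradle _
        _ ≤ L * (q ^ (n+1) * Z) := mul_le_mul_of_nonneg_left (hdecay' (n+1)) hL.le
        _ = L * Z * q ^ (n+1) := by ring
    have hn : ‖z (n+2) - z' (n+2)‖ ≤
        ‖(z (n+1) - ρ₁ • f' (z (n+1))) - (z' (n+1) - ρ₁ • f' (z' (n+1)))‖
        + ‖(ρ₂ - ρ₁) • f' (z' (n+1))‖ + ‖η • (z (n+1) - z' (n+1))‖ + ‖η • (z n - z' n)‖ := by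
      rw [hsplit]
      refine (norm_add_le _ _).trans ?_
      gcongr
      refine (norm_sub_le _ _).trans ?_
      gcongr
      exact norm_add_le _ _
    have e1 : ‖(ρ₂ - ρ₁) • f' (z' (n+1))‖ = (ρ₂ - ρ₁) * ‖f' (z' (n+1))‖ := by
      rw [norm_smul, Real.norm_eq_abs, abs_of_nonneg hδ]
    have e2 : ‖η • (z (n+1) - z' (n+1))‖ = η * ‖z (n+1) - z' (n+1)‖ := by
      rw [norm_smul, Real.norm_eq_abs, abs_of_pos hηpos]
    have e3 : ‖η • (z n - z' n)‖ = η * ‖z n - z' n‖ := by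
      rw [norm_smul, Real.norm_eq_abs, abs_of_pos hηpos]
    rw [e1, e2, e3] at hn
    have h3 : (ρ₂ - ρ₁) * ‖f' (z' (n+1))‖ ≤ (ρ₂ - ρ₁) * (L * Z * q ^ (n+1)) :=
      mul_le_mul_of_nonneg_left h2 hδ
    linarith [hn, h1, h3]
  -- facts about G
  have G0 : G 0 = 0 := by
    have hAB : (R₀ * r₂ - R₁) / (r₂ - r₁) * r₁ ^ 0 + (R₀ * r₁ - R₁) / (r₁ - r₂) * r₂ ^ 0 = R₀ := by
      rw [pow_zero, pow_zero, mul_one, mul_one, div_add_div _ _ hr21 hr12,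
        div_eq_iff (mul_ne_zero hr21 hr12)]
      ring
    rw [hG 0, hAB, hR₀]
    ring
  have G1 : G 1 = D * (L * Z) / β := by
    have hAB : (R₀ * r₂ - R₁) / (r₂ - r₁) * r₁ ^ 1 + (R₀ * r₁ - R₁) / (r₁ - r₂) * r₂ ^ 1 = R₁ := by
      rw [pow_one, pow_one, div_mul_eq_mul_div, div_mul_eq_mul_div,
        div_add_div _ _ hr21 hr12, div_eq_iff (mul_ne_zero hr21 hr12)]
      ring
    rw [hG 1, hAB, hR₁]
    ring
  have Grec : ∀ n : ℕ, G (n+2) = (D + η) * G (n+1) + η * G n + L * Z * q ^ (n+2) := by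
    intro n
    have h1 : r₁ ^ 2 = (D + η) * r₁ + η := by linarith [hr₁]
    have h2 : r₂ ^ 2 = (D + η) * r₂ + η := by linarith [hr₂]
    have hr₁' : r₁ ^ (n+2) = (D + η) * r₁ ^ (n+1) + η * r₁ ^ n := by
      calc r₁ ^ (n+2) = r₁ ^ n * r₁ ^ 2 := by ring
        _ = r₁ ^ n * ((D + η) * r₁ + η) := by rw [h1]
        _ = (D + η) * r₁ ^ (n+1) + η * r₁ ^ n := by ring
    have hr₂' : r₂ ^ (n+2) = (D + η) * r₂ ^ (n+1) + η * r₂ ^ n := by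
      calc r₂ ^ (n+2) = r₂ ^ n * r₂ ^ 2 := by ring
        _ = r₂ ^ n * ((D + η) * r₂ + η) := by rw [h2]
        _ = (D + η) * r₂ ^ (n+1) + η * r₂ ^ n := by ring
    have hq2 : q ^ 2 = (D + η) * q + η - Δ := by rw [hΔ]; ring
    have hq' : L * Z * q ^ (n+4) / Δ =
        (D + η) * (L * Z * q ^ (n+3) / Δ) + η * (L * Z * q ^ (n+2) / Δ) - L * Z * q ^ (n+2) := by
      have h4 : q ^ (n+4) = q ^ (n+2) * q ^ 2 := by ring
      rw [h4, hq2]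
      field_simp
      ring
    rw [hG (n+2), hG (n+1), hG n, hr₁', hr₂']
    linear_combination -hq'
  -- the auxiliary sequence s
  set s : ℕ → ℝ := fun n => Nat.casesOn n (0:ℝ) (fun m => L * Z / β * q ^ (m+1)) with hsdef
  have hs0 : s 0 = 0 := rfl
  have hs1 : ∀ n : ℕ, s (n+1) = L * Z / β * q ^ (n+1) := fun n => rfl
  have hs2 : ∀ n : ℕ, s (n+2) = L * Z / β * q ^ (n+2) := fun n => rfl
  have hs1e : s 1 = L * Z / β * q ^ 1 := rfl
  clear_value s
  have hsnn : ∀ n : ℕ, 0 ≤ s n := by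
    intro n
    cases n with
    | zero => rw [hs0]
    | succ m => rw [hs1]; positivity
  -- base cases
  have base0 : ‖z 0 - z' 0‖ ≤ (ρ₂ - ρ₁) * (G 0 - s 0) := by
    rw [hz0, hz'0, sub_self, norm_zero, G0, hs0]
    simp
  have base1 : ‖z 1 - z' 1‖ ≤ (ρ₂ - ρ₁) * (G 1 - s 1) := by
    have hv : z 1 - z' 1 = (ρ₂ - ρ₁) • f' z₀ := by rw [hz1, hz'1]; module
    have h1 : ‖z 1 - z' 1‖ = (ρ₂ - ρ₁) * ‖f' z₀‖ := by
      rw [hv, norm_smul, Real.norm_eq_abs, abs_of_nonneg hδ]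
    have h2 : ‖f' z₀‖ ≤ L * Z := by
      calc ‖f' z₀‖ ≤ L * ‖z₀‖ := hgradle z₀
        _ ≤ L * Z := mul_le_mul_of_nonneg_left hz₀Z hL.le
    have h3 : L * Z ≤ G 1 - s 1 := by
      rw [G1, hs1e]
      have he : D * (L * Z) / β - L * Z / β * q ^ 1 = (D * (L * Z) - L * Z * q) / β := by
        ring
      rw [he, le_div_iff₀ hβ0]
      nlinarith [mul_nonneg (sub_nonneg.2 hD1) hLZ.le]
    calc ‖z 1 - z' 1‖ = (ρ₂ - ρ₁) * ‖f' z₀‖ := h1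
      _ ≤ (ρ₂ - ρ₁) * (L * Z) := mul_le_mul_of_nonneg_left h2 hδ
      _ ≤ (ρ₂ - ρ₁) * (G 1 - s 1) := mul_le_mul_of_nonneg_left h3 hδ
  -- inductive step
  have step : ∀ n : ℕ, ‖z n - z' n‖ ≤ (ρ₂ - ρ₁) * (G n - s n) →
      ‖z (n+1) - z' (n+1)‖ ≤ (ρ₂ - ρ₁) * (G (n+1) - s (n+1)) →
      ‖z (n+2) - z' (n+2)‖ ≤ (ρ₂ - ρ₁) * (G (n+2) - s (n+2)) := by
    intro n ih1 ih2
    have hDη : 0 ≤ D + η := by linarith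
    have hkey : (D + η) * (G (n+1) - s (n+1)) + η * (G n - s n) + L * Z * q ^ (n+1) ≤
        G (n+2) - s (n+2) := by
      rw [Grec n, hs1 n, hs2 n]
      have hA : 0 < L * Z / β * q ^ (n+1) := by positivity
      have hb : L * Z * q ^ (n+1) = β * (L * Z / β * q ^ (n+1)) := by
        field_simp
      have hc : L * Z * q ^ (n+2) = q * β * (L * Z / β * q ^ (n+1)) := by
        field_simp; ring
      have hd : L * Z / β * q ^ (n+2) = q * (L * Z / β * q ^ (n+1)) := by ring
      rw [hb, hc, hd]
      nlinarith [mul_nonneg (show (0:ℝ) ≤ D + η - β - q by linarith) hA.le,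
        mul_nonneg (mul_nonneg hβ0.le hq0.le) hA.le,
        mul_nonneg hηpos.le (hsnn n)]
    calc ‖z (n+2) - z' (n+2)‖ ≤
        (D + η) * ‖z (n+1) - z' (n+1)‖ + η * ‖z n - z' n‖ + (ρ₂ - ρ₁) * (L * Z * q ^ (n+1)) :=
          herec n
      _ ≤ (D + η) * ((ρ₂ - ρ₁) * (G (n+1) - s (n+1))) + η * ((ρ₂ - ρ₁) * (G n - s n))
          + (ρ₂ - ρ₁) * (L * Z * q ^ (n+1)) := by
          have := mul_le_mul_of_nonneg_left ih2 hDη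
          have := mul_le_mul_of_nonneg_left ih1 hηpos.le
          linarith
      _ = (ρ₂ - ρ₁) * ((D + η) * (G (n+1) - s (n+1)) + η * (G n - s n) + L * Z * q ^ (n+1)) := by
          ring
      _ ≤ (ρ₂ - ρ₁) * (G (n+2) - s (n+2)) := mul_le_mul_of_nonneg_left hkey hδ
  -- the full invariant
  have key : ∀ n : ℕ, ‖z n - z' n‖ ≤ (ρ₂ - ρ₁) * (G n - s n) ∧
      ‖z (n+1) - z' (n+1)‖ ≤ (ρ₂ - ρ₁) * (G (n+1) - s (n+1)) := by
    intro n
    induction n with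
    | zero => exact ⟨base0, base1⟩
    | succ m ih => exact ⟨ih.2, step m ih.1 ih.2⟩
  intro j _
  calc ‖z j - z' j‖ ≤ (ρ₂ - ρ₁) * (G j - s j) := (key j).1
    _ ≤ (ρ₂ - ρ₁) * G j :=
      mul_le_mul_of_nonneg_left (by linarith [hsnn j]) hδ
end

section
/- Let ρ₁ ∈ [ρ_l, ρ_u] ⊂ (0, ∞), η₁ ∈ [η_l, η_u] ⊂ (0, ∞), β ∈ (0, 1), L > 0, Z > 0, ν with 0 < ν < LZ, and let r₁ > r₂, Δ, R₀, R₁ and G(ρ₁, η₁, ·) be as in the definition of G. Set R* := (R₀r₂ − R₁)/(r₂ − r₁) + |(R₀r₁ − R₁)/(r₁ − r₂)|, H := log(ν/(LZ))/log(1 − β), and G* := LZ·D(ρ₁)/β + R*·r₁·(r₁^H − 1)/(r₁ − 1), where r₁^H denotes the real power. Then for every natural number M with 1 ≤ M ≤ H, LZ·D(ρ₁)/β + Σ_{j=1}^{M} G(ρ₁, η₁, j) ≤ G*. -/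

private lemma cg_aux_roots (D η r₁ r₂ : ℝ) (hD : 1 ≤ D) (hη : 0 < η) (hr : r₂ < r₁)
    (h1 : r₁ ^ 2 - (D + η) * r₁ - η = 0) (h2 : r₂ ^ 2 - (D + η) * r₂ - η = 0) :
    1 < r₁ ∧ |r₂| ≤ r₁ := by
  have hsum : r₁ + r₂ = D + η := by
    have h : (r₁ - r₂) * (r₁ + r₂ - (D + η)) = 0 := by linear_combination h1 - h2
    rcases mul_eq_zero.mp h with h' | h'
    · exact absurd h' (by intro h''; linarith)
    · linarith
  have hprod : r₁ * r₂ = -η := by linear_combination r₁ * hsum - h1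
  have hkey : (1 - r₁) * (1 - r₂) = 1 - D - 2 * η := by
    linear_combination -hsum + hprod
  have hr₁1 : 1 < r₁ := by
    by_contra h
    push_neg at h
    nlinarith [mul_nonneg (by linarith : (0:ℝ) ≤ 1 - r₁) (by linarith : (0:ℝ) ≤ 1 - r₂)]
  have hr₁0 : (0:ℝ) < r₁ := by linarith
  refine ⟨hr₁1, ?_⟩
  rw [abs_le]
  refine ⟨?_, by linarith⟩
  by_contra h
  push_neg at h
  have hx : r₁ * r₂ < r₁ * (-r₁) := mul_lt_mul_of_pos_left h hr₁0
  have hy : r₁ ≤ (D + η) * r₁ := le_mul_of_one_le_left hr₁0.le (by linarith)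
  nlinarith

private lemma cg_aux_delta (D η β : ℝ) (hD : 1 ≤ D) (hη : 0 < η)
    (hβ0 : 0 < β) (hβ1 : β < 1) :
    0 < (D + η) * (1 - β) + η - (1 - β) ^ 2 := by
  nlinarith [mul_pos hβ0 (by linarith : (0:ℝ) < 1 - β), mul_pos hη hβ0,
    mul_le_mul_of_nonneg_right (add_le_add_right hD η) (by linarith : (0:ℝ) ≤ 1 - β)]

/-- A refined upper bound for `G` (Lemma 7):
`LZ·D(ρ₁)/β + Σ_{j=1}^{M} G(ρ₁, η₁, j) ≤ G* := LZ·D(ρ₁)/β + R*·r₁·(r₁^H - 1)/(r₁ - 1)`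
for every natural `M` with `1 ≤ M ≤ H` (`r₁^H` is the real power). -/
theorem cg_refined_upper_bound_G
    (L Z ν β : ℝ) (hL : 0 < L) (hZ : 0 < Z) (hν : 0 < ν) (hνLZ : ν < L * Z)
    (hβ : β ∈ Set.Ioo (0 : ℝ) 1)
    (ρl ρu ηl ηu : ℝ) (hρl : 0 < ρl) (hρlu : ρl ≤ ρu) (hηl : 0 < ηl) (hηlu : ηl ≤ ηu)
    (ρ₁ : ℝ) (hρ₁ : ρ₁ ∈ Set.Icc ρl ρu)
    (η₁ : ℝ) (hη₁ : η₁ ∈ Set.Icc ηl ηu)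
    -- the roots of the characteristic equation r² - (D(ρ₁)+η₁)r - η₁ = 0
    (r₁ r₂ : ℝ) (hr : r₂ < r₁)
    (hr₁ : r₁ ^ 2 - (max 1 (L * ρ₁ - 1) + η₁) * r₁ - η₁ = 0)
    (hr₂ : r₂ ^ 2 - (max 1 (L * ρ₁ - 1) + η₁) * r₂ - η₁ = 0)
    -- the constants and function G
    (Δ R₀ R₁ : ℝ)
    (hΔ : Δ = (max 1 (L * ρ₁ - 1) + η₁) * (1 - β) + η₁ - (1 - β) ^ 2)
    (hR₀ : R₀ = L * Z * (1 - β) ^ 2 / Δ)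
    (hR₁ : R₁ = max 1 (L * ρ₁ - 1) * L * Z / β + L * Z * (1 - β) ^ 3 / Δ)
    (G : ℕ → ℝ)
    (hG : ∀ j : ℕ, G j = ((R₀ * r₂ - R₁) / (r₂ - r₁)) * r₁ ^ j +
      ((R₀ * r₁ - R₁) / (r₁ - r₂)) * r₂ ^ j - L * Z * (1 - β) ^ (j + 2) / Δ)
    -- the refined upper bound G*
    (Rstar Hb Gstar : ℝ)
    (hRstar : Rstar = (R₀ * r₂ - R₁) / (r₂ - r₁) + |(R₀ * r₁ - R₁) / (r₁ - r₂)|)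
    (hHb : Hb = Real.log (ν / (L * Z)) / Real.log (1 - β))
    (hGstar : Gstar = L * Z * max 1 (L * ρ₁ - 1) / β +
      Rstar * (r₁ * ((r₁ ^ Hb - 1) / (r₁ - 1)))) :
    ∀ M : ℕ, 1 ≤ M → (M : ℝ) ≤ Hb →
      L * Z * max 1 (L * ρ₁ - 1) / β + ∑ j ∈ Finset.Icc 1 M, G j ≤ Gstar := by
  obtain ⟨hβ0, hβ1⟩ := hβ
  intro M hM1 hMHb
  have hη : 0 < η₁ := lt_of_lt_of_le hηl hη₁.1
  set D := max 1 (L * ρ₁ - 1) with hDdef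
  have hD1 : (1:ℝ) ≤ D := le_max_left _ _
  obtain ⟨hr₁1, habs⟩ := cg_aux_roots D η₁ r₁ r₂ hD1 hη hr hr₁ hr₂
  have hr₁0 : (0:ℝ) < r₁ := by linarith
  have hβ1' : (0:ℝ) < 1 - β := by linarith
  have hΔpos : 0 < Δ := hΔ ▸ cg_aux_delta D η₁ β hD1 hη hβ0 hβ1
  have hAB : (R₀ * r₂ - R₁) / (r₂ - r₁) + (R₀ * r₁ - R₁) / (r₁ - r₂) = R₀ := by
    have h1 : r₂ - r₁ ≠ 0 := by intro h; linarith
    have h2 : r₁ - r₂ ≠ 0 := by intro h; linarith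
    field_simp
    ring
  have hR₀pos : 0 < R₀ := by rw [hR₀]; positivity
  have hRstar0 : 0 ≤ Rstar := by
    rw [hRstar]
    have := le_abs_self ((R₀ * r₁ - R₁) / (r₁ - r₂))
    linarith
  have hterm : ∀ j ∈ Finset.Icc 1 M, G j ≤ Rstar * r₁ ^ j := by
    intro j _
    rw [hG j, hRstar]
    have h1 : ((R₀ * r₁ - R₁) / (r₁ - r₂)) * r₂ ^ j ≤
        |(R₀ * r₁ - R₁) / (r₁ - r₂)| * r₁ ^ j := by
      calc ((R₀ * r₁ - R₁) / (r₁ - r₂)) * r₂ ^ j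
          ≤ |((R₀ * r₁ - R₁) / (r₁ - r₂)) * r₂ ^ j| := le_abs_self _
        _ = |(R₀ * r₁ - R₁) / (r₁ - r₂)| * |r₂| ^ j := by rw [abs_mul, abs_pow]
        _ ≤ |(R₀ * r₁ - R₁) / (r₁ - r₂)| * r₁ ^ j :=
            mul_le_mul_of_nonneg_left (pow_le_pow_left₀ (abs_nonneg _) habs j)
              (abs_nonneg _)
    have h2 : 0 < L * Z * (1 - β) ^ (j + 2) / Δ := by positivity
    have h3 : ((R₀ * r₂ - R₁) / (r₂ - r₁) + |(R₀ * r₁ - R₁) / (r₁ - r₂)|) * r₁ ^ j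
        = ((R₀ * r₂ - R₁) / (r₂ - r₁)) * r₁ ^ j
          + |(R₀ * r₁ - R₁) / (r₁ - r₂)| * r₁ ^ j := by ring
    linarith
  have hsum_le : ∑ j ∈ Finset.Icc 1 M, G j ≤ Rstar * ∑ j ∈ Finset.Icc 1 M, r₁ ^ j := by
    rw [Finset.mul_sum]
    exact Finset.sum_le_sum hterm
  have hne1 : r₁ ≠ 1 := ne_of_gt hr₁1
  have hr₁m1 : (0:ℝ) < r₁ - 1 := by linarith
  have hgeom : ∑ j ∈ Finset.Icc 1 M, r₁ ^ j = r₁ * ((r₁ ^ M - 1) / (r₁ - 1)) := by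
    rw [← Finset.Ico_add_one_right_eq_Icc, Finset.sum_Ico_eq_sub _ (by omega)]
    rw [geom_sum_eq hne1, geom_sum_eq hne1]
    have h2 : r₁ - 1 ≠ 0 := ne_of_gt hr₁m1
    field_simp
    ring
  have hpow : r₁ ^ M ≤ r₁ ^ Hb := by
    rw [← Real.rpow_natCast r₁ M]
    exact Real.rpow_le_rpow_of_exponent_le hr₁1.le hMHb
  have hmono : Rstar * (r₁ * ((r₁ ^ M - 1) / (r₁ - 1))) ≤
      Rstar * (r₁ * ((r₁ ^ Hb - 1) / (r₁ - 1))) := by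
    apply mul_le_mul_of_nonneg_left _ hRstar0
    apply mul_le_mul_of_nonneg_left _ hr₁0.le
    gcongr
  rw [hGstar]
  rw [hgeom] at hsum_le
  linarith
end

section
/- Let ρ₁ ∈ [ρ_l, ρ_u] ⊂ (0, ∞), η₁ ∈ [η_l, η_u] ⊂ (0, ∞) with L < η_l, β ∈ (0, 1), L > 0, Z > 0, ν with 0 < ν < LZ, and let r₁ > r₂, F(η*), R₀, R₁ and H(η*, ρ₁, ·) be as in the definition of H. Set R*' := (R₀r₂ − R₁)/(r₂ − r₁) + |(R₀r₁ − R₁)/(r₁ − r₂)|, H := log(ν/(LZ))/log(1 − β), and H* := R*'·r₁·(r₁^H − 1)/(r₁ − 1), where r₁^H denotes the real power. Then for every natural number M with 1 ≤ M ≤ H, Σ_{j=1}^{M} H(η*, ρ₁, j) ≤ H*. -/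
set_option maxHeartbeats 1000000


/-- A refined upper bound for `H` (Lemma 8):
`Σ_{j=1}^{M} H(η*, ρ₁, j) ≤ H* := R*'·r₁·(r₁^H - 1)/(r₁ - 1)`
for every natural `M` with `1 ≤ M ≤ H` (`r₁^H` is the real power). -/
theorem cg_refined_upper_bound_H
    (L Z ν β : ℝ) (hL : 0 < L) (hZ : 0 < Z) (hν : 0 < ν) (hνLZ : ν < L * Z)
    (hβ : β ∈ Set.Ioo (0 : ℝ) 1)
    (ρl ρu ηl ηu : ℝ) (hρl : 0 < ρl) (hρlu : ρl ≤ ρu) (hηl : 0 < ηl) (hηlu : ηl ≤ ηu)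
    (hLη : L < ηl)
    (ρ₁ : ℝ) (hρ₁ : ρ₁ ∈ Set.Icc ρl ρu)
    (η₁ : ℝ) (hη₁ : η₁ ∈ Set.Icc ηl ηu)
    -- the roots of the characteristic equation r² - (D(ρ₁)+η₁)r - η₁ = 0
    (r₁ r₂ : ℝ) (hr : r₂ < r₁)
    (hr₁ : r₁ ^ 2 - (max 1 (L * ρ₁ - 1) + η₁) * r₁ - η₁ = 0)
    (hr₂ : r₂ ^ 2 - (max 1 (L * ρ₁ - 1) + η₁) * r₂ - η₁ = 0)
    (Hb : ℝ) (hHb : Hb = Real.log (ν / (L * Z)) / Real.log (1 - β))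
    -- the constants and function H
    (F : ℝ)
    (hF : IsGreatest {x : ℝ | ∃ n : ℕ, (n : ℝ) < Hb ∧ ∃ η ∈ Set.Icc ηl ηu,
      x = η ^ n * (ρ₁ * L * Z + ρ₁ * Z * L / (η - L)) - (ρ₁ * Z / (η - L)) * L ^ (n + 1)} F)
    (R₀ R₁ : ℝ)
    (hR₀ : R₀ = F / (max 1 (L * ρ₁ - 1) + 2 * η₁ - 1))
    (hR₁ : R₁ = F / η₁ * (1 + 1 / (max 1 (L * ρ₁ - 1) + 2 * η₁ - 1)))
    (H : ℕ → ℝ)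
    (hH : ∀ j : ℕ, H j = ((R₀ * r₂ - R₁) / (r₂ - r₁)) * r₁ ^ j +
      ((R₀ * r₁ - R₁) / (r₁ - r₂)) * r₂ ^ j -
      F / (max 1 (L * ρ₁ - 1) + 2 * η₁ - 1))
    -- the refined upper bound H*
    (Rstar' Hstar : ℝ)
    (hRstar' : Rstar' = (R₀ * r₂ - R₁) / (r₂ - r₁) + |(R₀ * r₁ - R₁) / (r₁ - r₂)|)
    (hHstar : Hstar = Rstar' * (r₁ * ((r₁ ^ Hb - 1) / (r₁ - 1)))) :
    ∀ M : ℕ, 1 ≤ M → (M : ℝ) ≤ Hb →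
      ∑ j ∈ Finset.Icc 1 M, H j ≤ Hstar := by

  intro M hM hMHb
  have hρ₁pos : 0 < ρ₁ := lt_of_lt_of_le hρl hρ₁.1
  have hη₁pos : 0 < η₁ := lt_of_lt_of_le hηl hη₁.1
  have hD : (1:ℝ) ≤ max 1 (L * ρ₁ - 1) := le_max_left _ _
  set D : ℝ := max 1 (L * ρ₁ - 1) with hDdef
  have hrne : r₁ - r₂ ≠ 0 := by linarith
  -- sum and product of roots
  have hsum : r₁ + r₂ = D + η₁ := by
    have key : (r₁ - r₂) * (r₁ + r₂ - (D + η₁)) = 0 := by linear_combination hr₁ - hr₂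
    rcases mul_eq_zero.1 key with h | h
    · exact absurd h hrne
    · linarith
  have hprod : r₁ * r₂ = -η₁ := by linear_combination (-1 : ℝ) * hr₂ + r₂ * hsum
  have hr₂neg : r₂ < 0 := by nlinarith
  have hr₁pos : 0 < r₁ := by nlinarith
  have hr₁gt1 : 1 < r₁ := by nlinarith
  have hr₂gtm1 : -1 < r₂ := by nlinarith
  have habs : |r₂| ≤ r₁ := by
    rw [abs_of_neg hr₂neg]; linarith
  -- positivity of F
  have hHb1 : (1:ℝ) ≤ Hb := le_trans (by exact_mod_cast hM) hMHb
  have hmem : ρ₁ * L * Z ∈ {x : ℝ | ∃ n : ℕ, (n : ℝ) < Hb ∧ ∃ η ∈ Set.Icc ηl ηu,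
      x = η ^ n * (ρ₁ * L * Z + ρ₁ * Z * L / (η - L)) - (ρ₁ * Z / (η - L)) * L ^ (n + 1)} := by
    refine ⟨0, by norm_num; linarith, ηl, ⟨le_refl _, hηlu⟩, ?_⟩
    ring
  have hFge : ρ₁ * L * Z ≤ F := hF.2 hmem
  have hFpos : 0 < F := lt_of_lt_of_le (by positivity) hFge
  have hDdpos : 0 < D + 2 * η₁ - 1 := by linarith
  have hR₀pos : 0 < R₀ := by rw [hR₀]; positivity
  have hR₁pos : 0 < R₁ := by
    rw [hR₁]
    have : 0 < 1 + 1 / (D + 2 * η₁ - 1) := by positivity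
    positivity
  set A : ℝ := (R₀ * r₂ - R₁) / (r₂ - r₁) with hA
  set B : ℝ := (R₀ * r₁ - R₁) / (r₁ - r₂) with hB
  have hApos : 0 < A := by
    have hAeq : A = (R₁ - R₀ * r₂) / (r₁ - r₂) := by
      rw [hA, div_eq_div_iff (by linarith : r₂ - r₁ ≠ 0) (by linarith : r₁ - r₂ ≠ 0)]; ring
    rw [hAeq]
    apply div_pos
    · nlinarith
    · linarith
  have hRsnn : 0 ≤ Rstar' := by
    rw [hRstar']
    have := abs_nonneg ((R₀ * r₁ - R₁) / (r₁ - r₂))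
    linarith
  -- per-term bound
  have hterm : ∀ j : ℕ, H j ≤ Rstar' * r₁ ^ j := by
    intro j
    rw [hH j, hRstar']
    have h1 : B * r₂ ^ j ≤ |B| * r₁ ^ j := by
      calc B * r₂ ^ j ≤ |B * r₂ ^ j| := le_abs_self _
        _ = |B| * |r₂| ^ j := by rw [abs_mul, abs_pow]
        _ ≤ |B| * r₁ ^ j := by
            apply mul_le_mul_of_nonneg_left _ (abs_nonneg _)
            exact pow_le_pow_left₀ (abs_nonneg _) habs j
    have h2 : 0 < F / (D + 2 * η₁ - 1) := by positivity
    have := hA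
    nlinarith
  -- geometric sum
  have hr₁ne1 : r₁ ≠ 1 := ne_of_gt hr₁gt1
  have hsum2 : ∑ j ∈ Finset.Icc 1 M, r₁ ^ j = (r₁ ^ (M + 1) - r₁) / (r₁ - 1) := by
    have h := geom_sum_Ico hr₁ne1 (Nat.le_succ_of_le hM)
    have : Finset.Icc 1 M = Finset.Ico 1 (M + 1) := by
      rw [Finset.Ico_add_one_right_eq_Icc]
    rw [this, h, pow_one]
  have hbound : ∑ j ∈ Finset.Icc 1 M, H j ≤ Rstar' * ((r₁ ^ (M + 1) - r₁) / (r₁ - 1)) := by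
    calc ∑ j ∈ Finset.Icc 1 M, H j ≤ ∑ j ∈ Finset.Icc 1 M, Rstar' * r₁ ^ j :=
          Finset.sum_le_sum fun j _ => hterm j
      _ = Rstar' * ∑ j ∈ Finset.Icc 1 M, r₁ ^ j := by rw [Finset.mul_sum]
      _ = Rstar' * ((r₁ ^ (M + 1) - r₁) / (r₁ - 1)) := by rw [hsum2]
  refine hbound.trans ?_
  rw [hHstar]
  have hpow : r₁ ^ (M + 1) - r₁ ≤ r₁ * (r₁ ^ Hb - 1) := by
    have h1 : (r₁ : ℝ) ^ (M : ℕ) ≤ r₁ ^ Hb := by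
      rw [← Real.rpow_natCast r₁ M]
      exact Real.rpow_le_rpow_of_exponent_le (le_of_lt hr₁gt1) hMHb
    have : r₁ ^ (M + 1) = r₁ * r₁ ^ (M : ℕ) := by ring
    nlinarith
  have hden : 0 < r₁ - 1 := by linarith
  calc Rstar' * ((r₁ ^ (M + 1) - r₁) / (r₁ - 1))
      ≤ Rstar' * ((r₁ * (r₁ ^ Hb - 1)) / (r₁ - 1)) := by
        apply mul_le_mul_of_nonneg_left _ hRsnn
        exact (div_le_div_iff_of_pos_right hden).mpr hpow
    _ = Rstar' * (r₁ * ((r₁ ^ Hb - 1) / (r₁ - 1))) := by ring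
end
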